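/- Let G be a finite directed graph partitioned into vertex classes V_1, ..., V_k. If inserting an edge set F with all endpoints in a single class V_i into G creates a directed cycle, and G itself is acyclic, then the created cycle need not be contained in V_i; however, every such cycle induces a cycle in the graph on V_i whose edges are F together with the pairs (u,v) ∈ V_i × V_i with v reachable from u in G. -/

import Mathlib

open Relation

section Aux

variable {V : Type*} (E F : V → V → Prop)

/-- From a nonempty E∪F path, either it's pure E, or it contains an F edge. -/
lemma aux_splitF : ∀ x y, TransGen (fun a b => E a b ∨ F a b) x y →
    TransGen E x y ∨ ∃ a b, F a b ∧ ReflTransGen (fun a b => E a b ∨ F a b) x a ∧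
      ReflTransGen (fun a b => E a b ∨ F a b) b y := by
  intro x y h
  induction h using TransGen.head_induction_on with
  | single h =>
    rcases h with h | h
    · exact Or.inl (TransGen.single h)
    · exact Or.inr ⟨_, _, h, ReflTransGen.refl, ReflTransGen.refl⟩
  | head h _ ihrec =>
    rename_i x c hcy
    rcases h with h | h
    · rcases ihrec with h' | ⟨a, b, hab, hxa, hby⟩
      · exact Or.inl (TransGen.head h h')
      · exact Or.inr ⟨a, b, hab, ReflTransGen.head (Or.inl h) hxa, hby⟩
    · exact Or.inr ⟨x, c, h, ReflTransGen.refl, hcy.to_reflTransGen⟩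

end Aux

theorem stmt_13 {V : Type*} [Fintype V] (E : V → V → Prop)
    (hacyc : ¬ ∃ v, Relation.TransGen E v v)
    (k : ℕ) (P : Fin k → Set V)
    (hdisj : ∀ i j, i ≠ j → Disjoint (P i) (P j))
    (hcover : (⋃ i, P i) = Set.univ)
    (i : Fin k)
    (F : V → V → Prop) (hF : ∀ a b, F a b → a ∈ P i ∧ b ∈ P i)
    (hcyc : ∃ v, Relation.TransGen (fun a b => E a b ∨ F a b) v v) :
    ∃ v, Relation.TransGen
      (fun a b => F a b ∨ (a ∈ P i ∧ b ∈ P i ∧ Relation.TransGen E a b)) v v := by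
  set S : V → V → Prop :=
    fun a b => F a b ∨ (a ∈ P i ∧ b ∈ P i ∧ Relation.TransGen E a b) with hS
  -- key lemma: an E∪F path from x to y ∈ P i decomposes
  have key : ∀ x y, ReflTransGen (fun a b => E a b ∨ F a b) x y → y ∈ P i →
      ReflTransGen E x y ∨
        ∃ z w, z ∈ P i ∧ ReflTransGen E x z ∧ F z w ∧ ReflTransGen S w y := by
    intro x y h hy
    induction h using ReflTransGen.head_induction_on with
    | refl => exact Or.inl ReflTransGen.refl
    | head h _ ihrec =>
      rename_i x c hcy
      -- helper: turn the IH (path from c, with c ∈ P i) into ReflTransGen S c y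
      have toS : ∀ c, c ∈ P i →
          (ReflTransGen E c y ∨
            ∃ z w, z ∈ P i ∧ ReflTransGen E c z ∧ F z w ∧ ReflTransGen S w y) →
          ReflTransGen S c y := by
        intro c hc ih
        rcases ih with h' | ⟨z, w, hz, hcz, hzw, hwy⟩
        · rcases (Relation.reflTransGen_iff_eq_or_transGen.mp h') with rfl | ht
          · exact ReflTransGen.refl
          · exact ReflTransGen.single (Or.inr ⟨hc, hy, ht⟩)
        · have hcw : ReflTransGen S c w := by
            rcases (Relation.reflTransGen_iff_eq_or_transGen.mp hcz) with rfl | ht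
            · exact ReflTransGen.single (Or.inl hzw)
            · exact ReflTransGen.head (Or.inr ⟨hc, hz, ht⟩)
                (ReflTransGen.single (Or.inl hzw))
          exact hcw.trans hwy
      rcases h with h | h
      · rcases ihrec with h' | ⟨z, w, hz, hcz, hzw, hwy⟩
        · exact Or.inl (ReflTransGen.head h h')
        · exact Or.inr ⟨z, w, hz, ReflTransGen.head h hcz, hzw, hwy⟩
      · obtain ⟨hx, hc⟩ := hF _ _ h
        exact Or.inr ⟨x, c, hx, ReflTransGen.refl, h, toS c hc ihrec⟩
  obtain ⟨v, hv⟩ := hcyc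
  rcases aux_splitF E F v v hv with h | ⟨a, b, hab, hva, hbv⟩
  · exact absurd ⟨v, h⟩ hacyc
  obtain ⟨ha, hb⟩ := hF _ _ hab
  -- path from b to a in E∪F
  have hba : ReflTransGen (fun a b => E a b ∨ F a b) b a := hbv.trans hva
  rcases key b a hba ha with h' | ⟨z, w, hz, hbz, hzw, hwa⟩
  · -- pure E path b ⇝ a; a → b via F, so S-cycle at a
    rcases (Relation.reflTransGen_iff_eq_or_transGen.mp h') with rfl | ht
    · exact ⟨a, TransGen.single (Or.inl hab)⟩
    · exact ⟨a, TransGen.head (Or.inl hab) (TransGen.single (Or.inr ⟨hb, ha, ht⟩))⟩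
  · -- a →F b, b ⇝E z (within/via E, b,z ∈ P i), z →F w, w ⇝S a
    have hbzS : ReflTransGen S b z := by
      rcases (Relation.reflTransGen_iff_eq_or_transGen.mp hbz) with rfl | ht
      · exact ReflTransGen.refl
      · exact ReflTransGen.single (Or.inr ⟨hb, hz, ht⟩)
    exact ⟨a, TransGen.head' (show S a b from Or.inl hab)
      ((hbzS.trans (ReflTransGen.single (show S z w from Or.inl hzw))).trans hwa)⟩
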